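/- arXiv:1309.4196 — 2 statements merged into one kernel-verified Lean document; each statement's English description precedes it below -/
import Mathlib

section
/- Let $n \geq 1$, $0 < \alpha < n$, $r, s > 1$ with $\frac{1}{r} + \frac{1}{s} + \frac{n-\alpha}{n} = 2$. Suppose the continuous Hardy-Littlewood-Sobolev inequality holds: $\int_{\mathbb{R}^n}\int_{\mathbb{R}^n} \frac{|f(x)g(y)|}{|x-y|^{n-\alpha}}\,dx\,dy \leq C' \|f\|_{L^r}\|g\|_{L^s}$ for all $f \in L^r(\mathbb{R}^n)$, $g \in L^s(\mathbb{R}^n)$. Then the discrete Hardy-Littlewood-Sobolev inequality holds: there exists $C > 0$ such that $\sum_{i \neq j, i,j \in \mathbb{Z}^n} \frac{|f_i||g_j|}{|i-j|^{n-\alpha}} \leq C \|f\|_{\ell^r}\|g\|_{\ell^s}$ for all $f \in \ell^r(\mathbb{Z}^n)$ and $g \in \ell^s(\mathbb{Z}^n)$. -/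
open scoped BigOperators
open Filter MeasureTheory

/-- Euclidean norm of a lattice point in `ℤ^n`. -/
noncomputable def znorm {n : ℕ} (v : Fin n → ℤ) : ℝ :=
  ‖(WithLp.equiv 2 (Fin n → ℝ)).symm (fun t => (v t : ℝ))‖

/-- The `ℓ^p` norm of a sequence indexed by `ℤ^n`. -/
noncomputable def lpNorm {n : ℕ} (f : (Fin n → ℤ) → ℝ) (p : ℝ) : ℝ :=
  (∑' i, |f i| ^ p) ^ (1 / p)

/-- The discrete HLS bilinear functional. -/
noncomputable def J {n : ℕ} (α : ℝ) (f g : (Fin n → ℤ) → ℝ) : ℝ :=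
  ∑' i, ∑' j, if j ≠ i then f i * g j / znorm (i - j) ^ ((n : ℝ) - α) else 0

namespace DiscreteHLS

variable {n : ℕ}

/-- The unit cube with lower-left corner at the lattice point `i`. -/
noncomputable def cube (i : Fin n → ℤ) : Set (EuclideanSpace ℝ (Fin n)) :=
  (MeasurableEquiv.toLp 2 (Fin n → ℝ)).symm ⁻¹'
    (Set.univ.pi fun t => Set.Ico ((i t : ℝ)) ((i t : ℝ) + 1))

lemma mem_cube {i : Fin n → ℤ} {x : EuclideanSpace ℝ (Fin n)} :
    x ∈ cube i ↔ ∀ t, (i t : ℝ) ≤ x t ∧ x t < (i t : ℝ) + 1 := by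
  simp [cube, Set.mem_pi, Set.mem_Ico]

lemma measurableSet_cube (i : Fin n → ℤ) : MeasurableSet (cube i) :=
  (MeasurableEquiv.toLp 2 (Fin n → ℝ)).symm.measurable
    (MeasurableSet.univ_pi fun _ => measurableSet_Ico)

lemma volume_cube (i : Fin n → ℤ) : volume (cube i) = 1 := by
  rw [cube, (EuclideanSpace.volume_preserving_symm_measurableEquiv_toLp (Fin n)).measure_preimage
    ((MeasurableSet.univ_pi fun _ => measurableSet_Ico).nullMeasurableSet)]
  simp [volume_pi_pi, Real.volume_Ico]

lemma cube_disjoint {i j : Fin n → ℤ} (hij : i ≠ j) : Disjoint (cube i) (cube j) := by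
  rw [Set.disjoint_left]
  intro x hxi hxj
  obtain ⟨t, ht⟩ := Function.ne_iff.mp hij
  have h1 := (mem_cube.mp hxi) t
  have h2 := (mem_cube.mp hxj) t
  rcases lt_or_gt_of_ne ht with h | h
  · have : (i t : ℝ) + 1 ≤ (j t : ℝ) := by exact_mod_cast Int.add_one_le_iff.mpr h
    linarith [h1.2, h2.1]
  · have : (j t : ℝ) + 1 ≤ (i t : ℝ) := by exact_mod_cast Int.add_one_le_iff.mpr h
    linarith [h1.1, h2.2]

lemma znorm_eq (v : Fin n → ℤ) : znorm v = Real.sqrt (∑ t, ((v t : ℝ)) ^ 2) := by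
  rw [znorm, EuclideanSpace.norm_eq]
  congr 1
  refine Finset.sum_congr rfl fun t _ => ?_
  rw [Real.norm_eq_abs, sq_abs]
  rfl

lemma znorm_nonneg (v : Fin n → ℤ) : 0 ≤ znorm v := norm_nonneg _

lemma one_le_znorm {v : Fin n → ℤ} (hv : v ≠ 0) : 1 ≤ znorm v := by
  obtain ⟨t, ht⟩ := Function.ne_iff.mp hv
  have h1 : (1 : ℝ) ≤ |(v t : ℝ)| := by
    exact_mod_cast Int.one_le_abs (by simpa using ht)
  rw [znorm_eq]
  calc (1:ℝ) ≤ |(v t : ℝ)| := h1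
  _ = Real.sqrt (((v t : ℝ))^2) := (Real.sqrt_sq_eq_abs _).symm
  _ ≤ Real.sqrt (∑ u, ((v u : ℝ))^2) := by
      apply Real.sqrt_le_sqrt
      exact Finset.single_le_sum (f := fun u => ((v u : ℝ))^2)
        (fun u _ => sq_nonneg _) (Finset.mem_univ t)

/-- The lattice point `i` viewed as a point of Euclidean space. -/
noncomputable def vec (i : Fin n → ℤ) : EuclideanSpace ℝ (Fin n) :=
  (WithLp.equiv 2 (Fin n → ℝ)).symm (fun t => (i t : ℝ))

lemma norm_sub_vec_le {i : Fin n → ℤ} {x : EuclideanSpace ℝ (Fin n)} (hx : x ∈ cube i) :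
    ‖x - vec i‖ ≤ Real.sqrt n := by
  rw [EuclideanSpace.norm_eq]
  have hbound : ∀ t, ‖(x - vec i) t‖ ^ 2 ≤ 1 := by
    intro t
    have h := (mem_cube.mp hx) t
    have happ : (x - vec i) t = x t - (i t : ℝ) := rfl
    rw [happ, Real.norm_eq_abs, sq_abs]
    nlinarith [h.1, h.2]
  calc Real.sqrt (∑ t, ‖(x - vec i) t‖ ^ 2) ≤ Real.sqrt (∑ _t : Fin n, (1:ℝ)) := by
        apply Real.sqrt_le_sqrt
        exact Finset.sum_le_sum fun t _ => hbound t
  _ = Real.sqrt n := by simp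

lemma norm_vec_sub (i j : Fin n → ℤ) : ‖vec i - vec j‖ = znorm (i - j) := by
  rw [EuclideanSpace.norm_eq, znorm, EuclideanSpace.norm_eq]
  congr 1
  refine Finset.sum_congr rfl fun t _ => ?_
  have h1 : (vec i - vec j) t = (i t : ℝ) - (j t : ℝ) := rfl
  have h2 : ((WithLp.equiv 2 (Fin n → ℝ)).symm (fun u => (((i - j) u : ℤ) : ℝ))) t
      = (((i t - j t : ℤ)) : ℝ) := rfl
  rw [h1, h2]
  push_cast
  ring

lemma norm_sub_le_bound {i j : Fin n → ℤ} {x y : EuclideanSpace ℝ (Fin n)}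
    (hx : x ∈ cube i) (hy : y ∈ cube j) :
    ‖x - y‖ ≤ znorm (i - j) + 2 * Real.sqrt n := by
  have hdecomp : x - y = (x - vec i) + ((vec i - vec j) + (vec j - y)) := by abel
  calc ‖x - y‖ = ‖(x - vec i) + ((vec i - vec j) + (vec j - y))‖ := by rw [← hdecomp]
  _ ≤ ‖x - vec i‖ + (‖vec i - vec j‖ + ‖vec j - y‖) := by
      exact (norm_add_le _ _).trans (by gcongr; exact norm_add_le _ _)
  _ = ‖x - vec i‖ + (znorm (i - j) + ‖vec j - y‖) := by rw [norm_vec_sub]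
  _ ≤ Real.sqrt n + (znorm (i - j) + Real.sqrt n) := by
      gcongr
      · exact norm_sub_vec_le hx
      · rw [norm_sub_rev]; exact norm_sub_vec_le hy
  _ = znorm (i - j) + 2 * Real.sqrt n := by ring

/-- Key pointwise kernel bound. -/
lemma key {β : ℝ} (hβ : 0 ≤ β) {i j : Fin n → ℤ} (hij : j ≠ i)
    {x y : EuclideanSpace ℝ (Fin n)} (hx : x ∈ cube i) (hy : y ∈ cube j)
    {a b : ℝ} (ha : 0 ≤ a) (hb : 0 ≤ b) :
    a * b / znorm (i - j) ^ β / ((1 + 2 * Real.sqrt n) ^ β)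
      ≤ a * b / ‖x - y‖ ^ β := by
  have hij' : i ≠ j := hij.symm
  have hz1 : 1 ≤ znorm (i - j) := one_le_znorm (sub_ne_zero_of_ne hij')
  have hz0 : 0 ≤ znorm (i - j) := by linarith
  have hxy_ne : x ≠ y := by
    intro h
    exact (Set.disjoint_left.mp (cube_disjoint hij') hx) (h ▸ hy)
  have hxy_pos : 0 < ‖x - y‖ := by
    rwa [norm_sub_pos_iff]
  have hsqrtn : 0 ≤ Real.sqrt n := Real.sqrt_nonneg _
  have hle : ‖x - y‖ ≤ (1 + 2 * Real.sqrt n) * znorm (i - j) := by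
    calc ‖x - y‖ ≤ znorm (i - j) + 2 * Real.sqrt n := norm_sub_le_bound hx hy
    _ ≤ znorm (i - j) + 2 * Real.sqrt n * znorm (i - j) := by nlinarith
    _ = (1 + 2 * Real.sqrt n) * znorm (i - j) := by ring
  have hrpow : ‖x - y‖ ^ β ≤ (1 + 2 * Real.sqrt n) ^ β * znorm (i - j) ^ β := by
    rw [← Real.mul_rpow (by linarith) hz0]
    exact Real.rpow_le_rpow (norm_nonneg _) hle hβ
  rw [div_div, ← Real.mul_rpow hz0 (by linarith)]
  apply div_le_div_of_nonneg_left (mul_nonneg ha hb) (Real.rpow_pos_of_pos hxy_pos β)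
  rw [Real.mul_rpow hz0 (by linarith)]
  calc ‖x - y‖ ^ β ≤ (1 + 2 * Real.sqrt n) ^ β * znorm (i - j) ^ β := hrpow
  _ = znorm (i - j) ^ β * (1 + 2 * Real.sqrt n) ^ β := by ring

/-- A constant lower bound on a unit-volume set gives a lower bound for the set integral. -/
lemma const_le_setLIntegral {c : ENNReal} {Q : Set (EuclideanSpace ℝ (Fin n))}
    (hQ : MeasurableSet Q) (hvol : volume Q = 1)
    (φ : EuclideanSpace ℝ (Fin n) → ENNReal) (h : ∀ x ∈ Q, c ≤ φ x) :
    c ≤ ∫⁻ x in Q, φ x := by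
  have h1 : (∫⁻ x in Q, Q.indicator (fun _ => c) x) = c := by
    rw [lintegral_indicator hQ, setLIntegral_const, Measure.restrict_apply hQ,
      Set.inter_self, hvol, mul_one]
  calc c = ∫⁻ x in Q, Q.indicator (fun _ => c) x := h1.symm
  _ ≤ ∫⁻ x in Q, φ x := by
      apply lintegral_mono
      intro x
      by_cases hx : x ∈ Q
      · simpa [Set.indicator_of_mem hx] using h x hx
      · simp [Set.indicator_of_notMem hx]

/-- The piecewise-constant extension of a sequence. -/
noncomputable def ext (f : (Fin n → ℤ) → ℝ) (A : Finset (Fin n → ℤ)) :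
    EuclideanSpace ℝ (Fin n) → ℝ :=
  fun x => ∑ i ∈ A, (cube i).indicator (fun _ => |f i|) x

lemma ext_eq_on {f : (Fin n → ℤ) → ℝ} {A : Finset (Fin n → ℤ)} {i : Fin n → ℤ}
    (hi : i ∈ A) {x : EuclideanSpace ℝ (Fin n)} (hx : x ∈ cube i) :
    ext f A x = |f i| := by
  rw [ext, Finset.sum_eq_single_of_mem i hi]
  · exact Set.indicator_of_mem hx _
  · intro j _ hji
    apply Set.indicator_of_notMem
    exact fun hxj => (Set.disjoint_left.mp (cube_disjoint hji) hxj) hx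

lemma memℒp_ext (f : (Fin n → ℤ) → ℝ) (A : Finset (Fin n → ℤ)) (p : ENNReal) :
    MemLp (ext f A) p volume := by
  apply memLp_finset_sum
  intro i _
  exact memLp_indicator_const p (measurableSet_cube i) _
    (Or.inr (by rw [volume_cube]; exact ENNReal.one_ne_top))

lemma eLpNorm_ext_le {f : (Fin n → ℤ) → ℝ} {A : Finset (Fin n → ℤ)} {p : ℝ}
    (hp : 1 < p) (hf : Summable fun i => |f i| ^ p) :
    eLpNorm (ext f A) (ENNReal.ofReal p) volume ≤ ENNReal.ofReal (lpNorm f p) := by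
  have hp0 : 0 < p := by linarith
  have hpne : ENNReal.ofReal p ≠ 0 := (ENNReal.ofReal_pos.mpr hp0).ne'
  have htr : (ENNReal.ofReal p).toReal = p := ENNReal.toReal_ofReal hp0.le
  rw [eLpNorm_eq_lintegral_rpow_enorm_toReal hpne ENNReal.ofReal_ne_top, htr]
  have hpt : ∀ x, ((‖ext f A x‖₊ : ENNReal)) ^ p
      = ∑ i ∈ A, (cube i).indicator (fun _ => ENNReal.ofReal (|f i| ^ p)) x := by
    intro x
    by_cases h : ∃ i ∈ A, x ∈ cube i
    · obtain ⟨i, hi, hx⟩ := h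
      rw [ext_eq_on hi hx, Finset.sum_eq_single_of_mem i hi]
      · rw [Set.indicator_of_mem hx]
        rw [← enorm_eq_nnnorm, ← ofReal_norm, Real.norm_eq_abs, abs_abs,
          ENNReal.ofReal_rpow_of_nonneg (abs_nonneg _) hp0.le]
      · intro j _ hji
        apply Set.indicator_of_notMem
        exact fun hxj => (Set.disjoint_left.mp (cube_disjoint hji) hxj) hx
    · push_neg at h
      have hFx : ext f A x = 0 := by
        rw [ext]
        apply Finset.sum_eq_zero
        intro i hi
        exact Set.indicator_of_notMem (h i hi) _
      rw [hFx]
      simp only [nnnorm_zero, ENNReal.coe_zero, ENNReal.zero_rpow_of_pos hp0]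
      symm
      apply Finset.sum_eq_zero
      intro i hi
      exact Set.indicator_of_notMem (h i hi) _
  calc (∫⁻ x, ((‖ext f A x‖₊ : ENNReal)) ^ p) ^ (1/p)
      = (∫⁻ x, ∑ i ∈ A, (cube i).indicator (fun _ => ENNReal.ofReal (|f i| ^ p)) x) ^ (1/p) := by
        congr 1
        exact lintegral_congr hpt
  _ = (∑ i ∈ A, ENNReal.ofReal (|f i| ^ p)) ^ (1/p) := by
        congr 1
        rw [lintegral_finset_sum _ (fun i _ =>
          (measurable_const.indicator (measurableSet_cube i)))]
        refine Finset.sum_congr rfl fun i _ => ?_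
        rw [lintegral_indicator (measurableSet_cube i), setLIntegral_const, volume_cube, mul_one]
  _ ≤ (ENNReal.ofReal (∑' i, |f i| ^ p)) ^ (1/p) := by
        apply ENNReal.rpow_le_rpow _ (by positivity)
        rw [← ENNReal.ofReal_sum_of_nonneg (fun i _ => Real.rpow_nonneg (abs_nonneg _) p)]
        exact ENNReal.ofReal_le_ofReal
          (Summable.sum_le_tsum A (fun i _ => Real.rpow_nonneg (abs_nonneg _) p) hf)
  _ = ENNReal.ofReal (lpNorm f p) := by
        rw [_root_.lpNorm, ENNReal.ofReal_rpow_of_nonneg (tsum_nonneg fun i =>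
          Real.rpow_nonneg (abs_nonneg _) p) (by positivity)]

end DiscreteHLS

theorem stmt_2 {n : ℕ} (hn : 1 ≤ n) (α r s C' : ℝ)
    (hα0 : 0 < α) (hαn : α < n) (hr : 1 < r) (hs : 1 < s)
    (hcrit : 1 / r + 1 / s + ((n : ℝ) - α) / n = 2) (hC' : 0 < C')
    (hHLS : ∀ f g : EuclideanSpace ℝ (Fin n) → ℝ,
      MemLp f (ENNReal.ofReal r) volume → MemLp g (ENNReal.ofReal s) volume →
      ∫⁻ x, ∫⁻ y, ENNReal.ofReal (|f x| * |g y| / ‖x - y‖ ^ ((n : ℝ) - α))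
        ≤ ENNReal.ofReal C' * eLpNorm f (ENNReal.ofReal r) volume
            * eLpNorm g (ENNReal.ofReal s) volume) :
    ∃ C > 0, ∀ f g : (Fin n → ℤ) → ℝ,
      Summable (fun i => |f i| ^ r) → Summable (fun i => |g i| ^ s) →
      ∀ A : Finset (Fin n → ℤ),
        ∑ i ∈ A, ∑ j ∈ A,
            (if j ≠ i then |f i| * |g j| / znorm (i - j) ^ ((n : ℝ) - α) else 0)
          ≤ C * lpNorm f r * lpNorm g s := by
  classical
  set β : ℝ := (n : ℝ) - α with hβdef
  have hβ : 0 < β := sub_pos.mpr hαn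
  set K : ℝ := (1 + 2 * Real.sqrt n) ^ β with hKdef
  have hK1 : 1 ≤ K := by
    calc (1:ℝ) = 1 ^ β := (Real.one_rpow β).symm
    _ ≤ K := Real.rpow_le_rpow (by norm_num) (by nlinarith [Real.sqrt_nonneg (n:ℝ)]) hβ.le
  have hK0 : 0 < K := by linarith
  refine ⟨C' * K, by positivity, ?_⟩
  intro f g hf hg A
  have hMF := DiscreteHLS.memℒp_ext f A (ENNReal.ofReal r)
  have hMG := DiscreteHLS.memℒp_ext g A (ENNReal.ofReal s)
  have hI := hHLS (DiscreteHLS.ext f A) (DiscreteHLS.ext g A) hMF hMG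
  -- the discrete bound, divided by K
  set bnd : (Fin n → ℤ) → (Fin n → ℤ) → ℝ := fun i j =>
    (if j ≠ i then |f i| * |g j| / znorm (i - j) ^ β else 0) / K with hbnddef
  have hbnd_nonneg : ∀ i j, 0 ≤ bnd i j := by
    intro i j
    apply div_nonneg _ hK0.le
    split
    · apply div_nonneg (mul_nonneg (abs_nonneg _) (abs_nonneg _))
      exact Real.rpow_nonneg (DiscreteHLS.znorm_nonneg _) β
    · exact le_refl 0
  -- pointwise lower bound for the kernel
  have hptwise : ∀ i ∈ A, ∀ x ∈ DiscreteHLS.cube i, ∀ j ∈ A, ∀ y ∈ DiscreteHLS.cube j,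
      ENNReal.ofReal (bnd i j) ≤ ENNReal.ofReal (|DiscreteHLS.ext f A x| * |DiscreteHLS.ext g A y| / ‖x - y‖ ^ β) := by
    intro i hi x hx j hj y hy
    by_cases hij : j = i
    · subst hij
      simp [hbnddef]
    · apply ENNReal.ofReal_le_ofReal
      rw [hbnddef]
      simp only [if_pos hij]
      rw [DiscreteHLS.ext_eq_on hi hx, DiscreteHLS.ext_eq_on hj hy, abs_abs, abs_abs]
      exact DiscreteHLS.key hβ.le hij hx hy (abs_nonneg _) (abs_nonneg _)
  -- lower bound the double integral
  have hdisj : (↑A : Set (Fin n → ℤ)).PairwiseDisjoint DiscreteHLS.cube :=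
    fun i _ j _ hij => DiscreteHLS.cube_disjoint hij
  have hmeas : ∀ b ∈ A, MeasurableSet (DiscreteHLS.cube b) :=
    fun b _ => DiscreteHLS.measurableSet_cube b
  have hinner : ∀ i ∈ A, ∀ x ∈ DiscreteHLS.cube i,
      (∑ j ∈ A, ENNReal.ofReal (bnd i j))
        ≤ ∫⁻ y, ENNReal.ofReal (|DiscreteHLS.ext f A x| * |DiscreteHLS.ext g A y| / ‖x - y‖ ^ β) := by
    intro i hi x hx
    calc (∑ j ∈ A, ENNReal.ofReal (bnd i j))
        ≤ ∑ j ∈ A, ∫⁻ y in DiscreteHLS.cube j,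
            ENNReal.ofReal (|DiscreteHLS.ext f A x| * |DiscreteHLS.ext g A y| / ‖x - y‖ ^ β) := by
          apply Finset.sum_le_sum
          intro j hj
          exact DiscreteHLS.const_le_setLIntegral (DiscreteHLS.measurableSet_cube j)
            (DiscreteHLS.volume_cube j) _ (fun y hy => hptwise i hi x hx j hj y hy)
    _ = ∫⁻ y in ⋃ j ∈ A, DiscreteHLS.cube j,
          ENNReal.ofReal (|DiscreteHLS.ext f A x| * |DiscreteHLS.ext g A y| / ‖x - y‖ ^ β) :=
        (lintegral_biUnion_finset hdisj hmeas _).symm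
    _ ≤ ∫⁻ y, ENNReal.ofReal (|DiscreteHLS.ext f A x| * |DiscreteHLS.ext g A y| / ‖x - y‖ ^ β) :=
        setLIntegral_le_lintegral _ _
  have houter : (∑ i ∈ A, ∑ j ∈ A, ENNReal.ofReal (bnd i j))
      ≤ ∫⁻ x, ∫⁻ y, ENNReal.ofReal (|DiscreteHLS.ext f A x| * |DiscreteHLS.ext g A y| / ‖x - y‖ ^ β) := by
    calc (∑ i ∈ A, ∑ j ∈ A, ENNReal.ofReal (bnd i j))
        ≤ ∑ i ∈ A, ∫⁻ x in DiscreteHLS.cube i,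
            ∫⁻ y, ENNReal.ofReal (|DiscreteHLS.ext f A x| * |DiscreteHLS.ext g A y| / ‖x - y‖ ^ β) := by
          apply Finset.sum_le_sum
          intro i hi
          exact DiscreteHLS.const_le_setLIntegral (DiscreteHLS.measurableSet_cube i)
            (DiscreteHLS.volume_cube i) _ (fun x hx => hinner i hi x hx)
    _ = ∫⁻ x in ⋃ i ∈ A, DiscreteHLS.cube i,
          ∫⁻ y, ENNReal.ofReal (|DiscreteHLS.ext f A x| * |DiscreteHLS.ext g A y| / ‖x - y‖ ^ β) :=
        (lintegral_biUnion_finset hdisj hmeas _).symm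
    _ ≤ ∫⁻ x, ∫⁻ y, ENNReal.ofReal (|DiscreteHLS.ext f A x| * |DiscreteHLS.ext g A y| / ‖x - y‖ ^ β) :=
        setLIntegral_le_lintegral _ _
  -- combine with HLS and the norm bounds
  have hNF := DiscreteHLS.eLpNorm_ext_le (A := A) hr hf
  have hNG := DiscreteHLS.eLpNorm_ext_le (A := A) hs hg
  have hlpf : 0 ≤ lpNorm f r := Real.rpow_nonneg
    (tsum_nonneg fun i => Real.rpow_nonneg (abs_nonneg _) r) _
  have hlpg : 0 ≤ lpNorm g s := Real.rpow_nonneg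
    (tsum_nonneg fun i => Real.rpow_nonneg (abs_nonneg _) s) _
  have hchain : (∑ i ∈ A, ∑ j ∈ A, ENNReal.ofReal (bnd i j))
      ≤ ENNReal.ofReal (C' * lpNorm f r * lpNorm g s) := by
    calc (∑ i ∈ A, ∑ j ∈ A, ENNReal.ofReal (bnd i j))
        ≤ ENNReal.ofReal C' * eLpNorm (DiscreteHLS.ext f A) (ENNReal.ofReal r) volume
            * eLpNorm (DiscreteHLS.ext g A) (ENNReal.ofReal s) volume := le_trans houter hI
    _ ≤ ENNReal.ofReal C' * ENNReal.ofReal (lpNorm f r) * ENNReal.ofReal (lpNorm g s) := by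
        exact mul_le_mul' (mul_le_mul' le_rfl hNF) hNG
    _ = ENNReal.ofReal (C' * lpNorm f r * lpNorm g s) := by
        rw [← ENNReal.ofReal_mul hC'.le, ← ENNReal.ofReal_mul (by positivity)]
  have hsum_eq : (∑ i ∈ A, ∑ j ∈ A, ENNReal.ofReal (bnd i j))
      = ENNReal.ofReal (∑ i ∈ A, ∑ j ∈ A, bnd i j) := by
    rw [ENNReal.ofReal_sum_of_nonneg (fun i _ =>
      Finset.sum_nonneg fun j _ => hbnd_nonneg i j)]
    exact Finset.sum_congr rfl fun i _ =>
      (ENNReal.ofReal_sum_of_nonneg (fun j _ => hbnd_nonneg i j)).symm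
  rw [hsum_eq] at hchain
  have hreal : (∑ i ∈ A, ∑ j ∈ A, bnd i j) ≤ C' * lpNorm f r * lpNorm g s :=
    (ENNReal.ofReal_le_ofReal_iff (by positivity)).mp hchain
  have hdivide : (∑ i ∈ A, ∑ j ∈ A,
      (if j ≠ i then |f i| * |g j| / znorm (i - j) ^ β else 0))
      = (∑ i ∈ A, ∑ j ∈ A, bnd i j) * K := by
    rw [Finset.sum_mul]
    refine Finset.sum_congr rfl fun i _ => ?_
    rw [Finset.sum_mul]
    refine Finset.sum_congr rfl fun j _ => ?_
    rw [hbnddef]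
    exact (div_mul_cancel₀ _ hK0.ne').symm
  calc (∑ i ∈ A, ∑ j ∈ A,
      (if j ≠ i then |f i| * |g j| / znorm (i - j) ^ β else 0))
      = (∑ i ∈ A, ∑ j ∈ A, bnd i j) * K := hdivide
  _ ≤ (C' * lpNorm f r * lpNorm g s) * K := by
      apply mul_le_mul_of_nonneg_right hreal hK0.le
  _ = C' * K * lpNorm f r * lpNorm g s := by ring
end

section
/- Let $n \geq 1$, $0 < \alpha < n$, $r, s > 1$ with $\frac{1}{r} + \frac{1}{s} + \frac{n-\alpha}{n} > 2$, and define $\epsilon \in (0,1)$ by $2 + \frac{\epsilon}{s} = \frac{1}{r} + \frac{1}{s} + \frac{n-\alpha}{n}$. Suppose nonnegative sequences $f, g$ supported in $\{|i| \leq N\}$ with $\|f\|_{\ell^r} = \|g\|_{\ell^s} = 1$ satisfy the Euler–Lagrange equations $f_i^{r-1} = \sum_{j \neq i} \frac{g_j}{|i-j|^{n-\alpha}}$ for all $|i| \leq N$ (and symmetrically for $g$), and suppose the discrete HLS operator $T$ defined by $(Th)_i = \sum_{j \neq i} \frac{h_j}{|i-j|^{n-\alpha}}$ is bounded from $\ell^{s/(1-\epsilon)}(\mathbb{Z}^n)$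 to $\ell^{r/(r-1)}(\mathbb{Z}^n)$ with norm $\leq C$. Then $\max_{|k| \leq N} g_k \geq C^{-1/\epsilon}$; in particular the maximum of $g$ is bounded below by a positive constant independent of $N$. -/
open scoped BigOperators
open Filter MeasureTheory

lemma znorm_nonneg {n : ℕ} (v : Fin n → ℤ) : 0 ≤ znorm v := norm_nonneg _

lemma znorm_zero {n : ℕ} : znorm (0 : Fin n → ℤ) = 0 := by
  have : (fun t => (((0 : Fin n → ℤ)) t : ℝ)) = 0 := by funext t; simp
  rw [znorm, this]
  simp

lemma abs_coord_le_znorm {n : ℕ} (v : Fin n → ℤ) (t : Fin n) : |(v t : ℝ)| ≤ znorm v := by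
  have h : znorm v = Real.sqrt (∑ i, ‖((v i : ℝ))‖ ^ 2) := by
    rw [znorm, EuclideanSpace.norm_eq]
    rfl
  rw [h]
  have h2 : |(v t : ℝ)| = Real.sqrt (‖((v t : ℝ))‖ ^ 2) := by
    rw [Real.norm_eq_abs, Real.sqrt_sq_eq_abs, abs_abs]
  rw [h2]
  apply Real.sqrt_le_sqrt
  exact Finset.single_le_sum (f := fun i => ‖((v i : ℝ))‖ ^ 2) (fun i _ => sq_nonneg _)
    (Finset.mem_univ t)

lemma one_le_znorm {n : ℕ} {v : Fin n → ℤ} (hv : v ≠ 0) : 1 ≤ znorm v := by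
  obtain ⟨t, ht⟩ : ∃ t, v t ≠ 0 := by
    by_contra hcon; push_neg at hcon; exact hv (funext hcon)
  refine le_trans ?_ (abs_coord_le_znorm v t)
  have : (1 : ℤ) ≤ |v t| := Int.one_le_abs ht
  calc (1 : ℝ) ≤ ((|v t| : ℤ) : ℝ) := by exact_mod_cast this
    _ = |(v t : ℝ)| := by push_cast; ring

lemma finite_ball {n : ℕ} (N : ℕ) : {i : Fin n → ℤ | znorm i ≤ (N : ℝ)}.Finite := by
  apply Set.Finite.subset (Set.finite_Icc (fun _ => -(N : ℤ)) (fun _ => (N : ℤ)))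
  intro i hi
  simp only [Set.mem_setOf_eq] at hi
  have key : ∀ t, |i t| ≤ (N : ℤ) := by
    intro t
    have h1 : |(i t : ℝ)| ≤ (N : ℝ) := le_trans (abs_coord_le_znorm i t) hi
    have h2 : ((|i t| : ℤ) : ℝ) ≤ ((N : ℤ) : ℝ) := by push_cast; push_cast at h1; linarith [h1]
    exact_mod_cast h2
  constructor
  · intro t; exact (abs_le.mp (key t)).1
  · intro t; exact (abs_le.mp (key t)).2

lemma sum_rpow_le_card_rpow_mul {ι : Type*} (S : Finset ι) (hS : S.Nonempty) (b : ι → ℝ)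
    (hb : ∀ j ∈ S, 0 ≤ b j) (q : ℝ) (hq : 0 ≤ q) :
    (∑ j ∈ S, b j) ^ q ≤ (S.card : ℝ) ^ q * ∑ j ∈ S, b j ^ q := by
  obtain ⟨j0, hj0, hmax⟩ := S.exists_max_image b hS
  have h0 : 0 ≤ b j0 := hb _ hj0
  have h1 : ∑ j ∈ S, b j ≤ (S.card : ℝ) * b j0 := by
    calc ∑ j ∈ S, b j ≤ ∑ _j ∈ S, b j0 := Finset.sum_le_sum fun j hj => hmax j hj
      _ = (S.card : ℝ) * b j0 := by rw [Finset.sum_const, nsmul_eq_mul]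
  calc (∑ j ∈ S, b j) ^ q ≤ ((S.card : ℝ) * b j0) ^ q :=
        Real.rpow_le_rpow (Finset.sum_nonneg hb) h1 hq
    _ = (S.card : ℝ) ^ q * b j0 ^ q := Real.mul_rpow (by positivity) h0
    _ ≤ (S.card : ℝ) ^ q * ∑ j ∈ S, b j ^ q := by
        apply mul_le_mul_of_nonneg_left _ (Real.rpow_nonneg (by positivity) q)
        exact Finset.single_le_sum (fun j hj => Real.rpow_nonneg (hb j hj) q) hj0

lemma summable_int_aux {p : ℝ} (hp : 1 < p) :
    Summable (fun m : ℤ => (1 + |(m : ℝ)|) ^ (-p)) := by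
  have hs := (Real.summable_one_div_int_add_rpow (1/2 : ℝ) p).mpr hp
  apply hs.of_nonneg_of_le (fun m => Real.rpow_nonneg (by positivity) _)
  intro m
  have habs : 0 < |(m : ℝ) + 1/2| := by
    rcases le_or_gt 0 m with h | h
    · have : (0 : ℝ) ≤ (m : ℝ) := by exact_mod_cast h
      rw [abs_of_pos (by linarith)]; linarith
    · have hm1 : m ≤ -1 := by omega
      have : (m : ℝ) ≤ -1 := by exact_mod_cast hm1
      rw [abs_of_neg (by linarith)]; linarith
  have hle : |(m : ℝ) + 1/2| ≤ 1 + |(m : ℝ)| := by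
    calc |(m : ℝ) + 1/2| ≤ |(m : ℝ)| + |(1/2 : ℝ)| := abs_add_le _ _
      _ ≤ 1 + |(m : ℝ)| := by rw [abs_of_pos (by norm_num : (0:ℝ) < 1/2)]; linarith
  rw [Real.rpow_neg (by positivity), ← one_div]
  apply one_div_le_one_div_of_le (Real.rpow_pos_of_pos habs p)
  exact Real.rpow_le_rpow habs.le hle (by linarith)

lemma summable_prod_aux (n : ℕ) {p : ℝ} (hp : 1 < p) :
    Summable (fun v : Fin n → ℤ => ∏ t, (1 + |(v t : ℝ)|) ^ (-p)) := by
  induction n with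
  | zero =>
      apply Summable.of_finite
  | succ m ih =>
      have h1 := summable_int_aux hp
      have hm := h1.mul_of_nonneg ih (fun x => Real.rpow_nonneg (by positivity) _)
        (fun v => Finset.prod_nonneg fun t _ => Real.rpow_nonneg (by positivity) _)
      rw [← (Fin.consEquiv (fun _ : Fin (m+1) => ℤ)).summable_iff]
      apply hm.congr
      rintro ⟨a, u⟩
      have he : (Fin.consEquiv (fun _ : Fin (m+1) => ℤ)) (a, u) = Fin.cons a u := rfl
      simp only [Function.comp_apply, he]
      rw [Fin.prod_univ_succ]
      simp [Fin.cons_zero, Fin.cons_succ]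

lemma summable_znorm_rpow {n : ℕ} (hn : 1 ≤ n) {β : ℝ} (hβ : (n : ℝ) < β) :
    Summable (fun v : Fin n → ℤ => if v = 0 then 0 else znorm v ^ (-β)) := by
  have hn0 : (0 : ℝ) < n := by exact_mod_cast hn
  set p := β / n with hp_def
  have hp1 : 1 < p := (one_lt_div hn0).mpr hβ
  have hprod := summable_prod_aux n hp1
  apply Summable.of_nonneg_of_le _ _ (hprod.mul_left ((2 : ℝ) ^ β))
  · intro v
    by_cases hv : v = 0
    · rw [if_pos hv]
    · rw [if_neg hv]; exact Real.rpow_nonneg (znorm_nonneg v) _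
  · intro v
    by_cases hv : v = 0
    · rw [if_pos hv]
      exact mul_nonneg (Real.rpow_nonneg (by norm_num) _)
        (Finset.prod_nonneg fun t _ => Real.rpow_nonneg (by positivity) _)
    · rw [if_neg hv]
      have h1z : 1 ≤ znorm v := one_le_znorm hv
      have hz0 : 0 < znorm v := lt_of_lt_of_le one_pos h1z
      have hprodle : ∏ t, (1 + |(v t : ℝ)|) ≤ (2 * znorm v) ^ (n : ℕ) := by
        calc ∏ t, (1 + |(v t : ℝ)|) ≤ ∏ _t : Fin n, (2 * znorm v) :=
              Finset.prod_le_prod (fun t _ => by positivity)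
                (fun t _ => by have := abs_coord_le_znorm v t; linarith)
          _ = (2 * znorm v) ^ (n : ℕ) := by
              rw [Finset.prod_const, Finset.card_univ, Fintype.card_fin]
      have hP : (((2 * znorm v) ^ (n : ℕ) : ℝ)) ^ (-p) ≤ ∏ t, (1 + |(v t : ℝ)|) ^ (-p) := by
        rw [Real.finset_prod_rpow _ _ (fun t _ => by positivity) (-p)]
        exact Real.rpow_le_rpow_of_nonpos (Finset.prod_pos fun t _ => by positivity) hprodle
          (neg_nonpos.mpr (by linarith))
      have hEq : (((2 * znorm v) ^ (n : ℕ) : ℝ)) ^ (-p) = (2 : ℝ) ^ (-β) * znorm v ^ (-β) := by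
        rw [← Real.rpow_natCast (2 * znorm v) n, ← Real.rpow_mul (by positivity)]
        have hnp : (n : ℝ) * (-p) = -β := by
          rw [hp_def]; field_simp
        rw [hnp, Real.mul_rpow (by norm_num) hz0.le]
      have hfin : (2 : ℝ) ^ (-β) * znorm v ^ (-β) ≤ ∏ t, (1 + |(v t : ℝ)|) ^ (-p) := hEq ▸ hP
      have h2β : (0 : ℝ) < 2 ^ β := Real.rpow_pos_of_pos two_pos β
      have h2 : (2 : ℝ) ^ β * ((2 : ℝ) ^ (-β) * znorm v ^ (-β)) = znorm v ^ (-β) := by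
        rw [← mul_assoc, ← Real.rpow_add two_pos]
        simp
      calc znorm v ^ (-β) = 2 ^ β * (2 ^ (-β) * znorm v ^ (-β)) := h2.symm
        _ ≤ 2 ^ β * ∏ t, (1 + |(v t : ℝ)|) ^ (-p) := mul_le_mul_of_nonneg_left hfin h2β.le

set_option maxHeartbeats 1600000 in
theorem stmt_9 {n : ℕ} (hn : 1 ≤ n) (α r s ε C : ℝ) (N : ℕ)
    (hα0 : 0 < α) (hαn : α < n) (hr : 1 < r) (hs : 1 < s)
    (hsup : 1 / r + 1 / s + ((n : ℝ) - α) / n > 2)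
    (hε : 2 + ε / s = 1 / r + 1 / s + ((n : ℝ) - α) / n)
    (hε0 : 0 < ε) (hε1 : ε < 1) (hC : 0 < C)
    (f g : (Fin n → ℤ) → ℝ) (hf : ∀ i, 0 ≤ f i) (hg : ∀ i, 0 ≤ g i)
    (hfsupp : ∀ i, ¬ znorm i ≤ (N : ℝ) → f i = 0)
    (hgsupp : ∀ i, ¬ znorm i ≤ (N : ℝ) → g i = 0)
    (hfn : lpNorm f r = 1) (hgn : lpNorm g s = 1)
    (hELf : ∀ i, znorm i ≤ (N : ℝ) →
      f i ^ (r - 1) = ∑' j, if j ≠ i then g j / znorm (i - j) ^ ((n : ℝ) - α) else 0)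
    (hELg : ∀ i, znorm i ≤ (N : ℝ) →
      g i ^ (s - 1) = ∑' j, if j ≠ i then f j / znorm (i - j) ^ ((n : ℝ) - α) else 0)
    (hT : ∀ h : (Fin n → ℤ) → ℝ, (∀ i, 0 ≤ h i) →
      Summable (fun i => |h i| ^ (s / (1 - ε))) →
      _root_.lpNorm (fun i => ∑' j, if j ≠ i then h j / znorm (i - j) ^ ((n : ℝ) - α) else 0)
          (r / (r - 1))
        ≤ C * _root_.lpNorm h (s / (1 - ε))) :
    ∃ k : Fin n → ℤ, znorm k ≤ (N : ℝ) ∧ C ^ (-(1 / ε)) ≤ g k := by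
  have hn0 : (0 : ℝ) < n := by exact_mod_cast hn
  have hr0 : (0 : ℝ) < r := lt_trans one_pos hr
  have hs0 : (0 : ℝ) < s := lt_trans one_pos hs
  have hr1 : (0 : ℝ) < r - 1 := by linarith
  have h1ε : (0 : ℝ) < 1 - ε := by linarith
  set q : ℝ := r / (r - 1) with hq_def
  have hq0 : 0 < q := div_pos hr0 hr1
  -- exponent inequality: n < (n - α) * q
  have hβ : (n : ℝ) < ((n : ℝ) - α) * q := by
    have h1s : 1 / s < 1 := by rw [div_lt_one hs0]; exact hs
    have h1' : (r - 1) / r < ((n : ℝ) - α) / n := by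
      have he : (r - 1) / r = 1 - 1 / r := by field_simp
      rw [he]; linarith
    rw [div_lt_div_iff₀ hr0 hn0] at h1'
    rw [hq_def, ← mul_div_assoc, lt_div_iff₀ hr1]
    nlinarith [h1']
  -- finite ball
  have hKfin : {i : Fin n → ℤ | znorm i ≤ (N : ℝ)}.Finite := finite_ball N
  set K : Finset (Fin n → ℤ) := hKfin.toFinset with hK
  have hKmem : ∀ i, i ∈ K ↔ znorm i ≤ (N : ℝ) := by
    intro i; rw [hK, Set.Finite.mem_toFinset]; rfl
  have hKne : K.Nonempty := ⟨0, by rw [hKmem, znorm_zero]; positivity⟩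
  -- maximizer of g
  obtain ⟨k, hkK, hkmax⟩ := K.exists_max_image g hKne
  set M := g k with hM
  have hgleM : ∀ j, g j ≤ M := by
    intro j
    by_cases hj : j ∈ K
    · exact hkmax j hj
    · rw [hgsupp j (fun hc => hj ((hKmem j).mpr hc))]; exact hg k
  -- tsum normalizations
  have htsg : ∑' i, |g i| ^ s = 1 := by
    have h0 : 0 ≤ ∑' i, |g i| ^ s := tsum_nonneg fun i => Real.rpow_nonneg (abs_nonneg _) _
    have hthis := hgn
    simp only [_root_.lpNorm] at hthis
    calc ∑' i, |g i| ^ s = ((∑' i, |g i| ^ s) ^ (1 / s)) ^ s := by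
          rw [← Real.rpow_mul h0, one_div_mul_cancel hs0.ne', Real.rpow_one]
      _ = 1 ^ s := by rw [hthis]
      _ = 1 := Real.one_rpow s
  have htsf : ∑' i, |f i| ^ r = 1 := by
    have h0 : 0 ≤ ∑' i, |f i| ^ r := tsum_nonneg fun i => Real.rpow_nonneg (abs_nonneg _) _
    have hthis := hfn
    simp only [_root_.lpNorm] at hthis
    calc ∑' i, |f i| ^ r = ((∑' i, |f i| ^ r) ^ (1 / r)) ^ r := by
          rw [← Real.rpow_mul h0, one_div_mul_cancel hr0.ne', Real.rpow_one]
      _ = 1 ^ r := by rw [hthis]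
      _ = 1 := Real.one_rpow r
  have hM0 : 0 < M := by
    rcases lt_or_ge 0 M with h | h
    · exact h
    · exfalso
      have hz : ∀ j, g j = 0 := fun j => le_antisymm (le_trans (hgleM j) h) (hg j)
      have : ∑' i, |g i| ^ s = 0 := by
        have : ∀ i : Fin n → ℤ, |g i| ^ s = 0 := by
          intro i; rw [hz i, abs_zero, Real.zero_rpow hs0.ne']
        simp [this]
      rw [this] at htsg; norm_num at htsg
  -- the function G = g^(1-ε)
  set G : (Fin n → ℤ) → ℝ := fun j => g j ^ (1 - ε) with hG_def
  have hG0 : ∀ j, 0 ≤ G j := fun j => Real.rpow_nonneg (hg j) _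
  have hGsupp : ∀ j, j ∉ K → G j = 0 := by
    intro j hj
    rw [hG_def]
    simp only []
    rw [hgsupp j (fun hc => hj ((hKmem j).mpr hc)), Real.zero_rpow h1ε.ne']
  -- h = T G
  set h : (Fin n → ℤ) → ℝ :=
    fun i => ∑' j, if j ≠ i then G j / znorm (i - j) ^ ((n : ℝ) - α) else 0 with hh_def
  have hterm_nonneg : ∀ i j, 0 ≤ (if j ≠ i then G j / znorm (i - j) ^ ((n : ℝ) - α) else 0) := by
    intro i j
    split
    · exact div_nonneg (hG0 j) (Real.rpow_nonneg (znorm_nonneg _) _)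
    · exact le_refl 0
  have hh0 : ∀ i, 0 ≤ h i := fun i => tsum_nonneg (hterm_nonneg i)
  have hhsum : ∀ i, h i = ∑ j ∈ K, (if j ≠ i then G j / znorm (i - j) ^ ((n : ℝ) - α) else 0) := by
    intro i
    apply tsum_eq_sum
    intro j hj
    rw [hGsupp j hj]
    simp
  -- pointwise bound  f i ^ (r-1) ≤ M^ε * h i on K
  have hfpow : ∀ i ∈ K, f i ^ (r - 1) ≤ M ^ ε * h i := by
    intro i hi
    rw [hELf i ((hKmem i).mp hi)]
    have hle : ∀ j, (if j ≠ i then g j / znorm (i - j) ^ ((n : ℝ) - α) else 0)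
        ≤ M ^ ε * (if j ≠ i then G j / znorm (i - j) ^ ((n : ℝ) - α) else 0) := by
      intro j
      by_cases hji : j ≠ i
      · simp only [if_pos hji]
        have hgG : g j ≤ M ^ ε * G j := by
          by_cases hgj : g j = 0
          · rw [hG_def]; simp only []
            rw [hgj, Real.zero_rpow h1ε.ne', mul_zero]
          · have hgj0 : 0 < g j := (hg j).lt_of_ne (Ne.symm hgj)
            calc g j = g j ^ ε * g j ^ (1 - ε) := by
                  rw [← Real.rpow_add hgj0]; norm_num
              _ ≤ M ^ ε * g j ^ (1 - ε) := by
                  apply mul_le_mul_of_nonneg_right _ (Real.rpow_nonneg hgj0.le _)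
                  exact Real.rpow_le_rpow (hg j) (hgleM j) hε0.le
              _ = M ^ ε * G j := rfl
        have hd : 0 ≤ (znorm (i - j) ^ ((n : ℝ) - α))⁻¹ :=
          inv_nonneg.mpr (Real.rpow_nonneg (znorm_nonneg _) _)
        calc g j / znorm (i - j) ^ ((n : ℝ) - α)
            = g j * (znorm (i - j) ^ ((n : ℝ) - α))⁻¹ := div_eq_mul_inv _ _
          _ ≤ (M ^ ε * G j) * (znorm (i - j) ^ ((n : ℝ) - α))⁻¹ :=
              mul_le_mul_of_nonneg_right hgG hd
          _ = M ^ ε * (G j / znorm (i - j) ^ ((n : ℝ) - α)) := by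
              rw [mul_assoc, ← div_eq_mul_inv]
      · simp only [if_neg hji, mul_zero, le_refl]
    have hsum1 : Summable (fun j => if j ≠ i then g j / znorm (i - j) ^ ((n : ℝ) - α) else 0) := by
      apply summable_of_ne_finset_zero (s := K)
      intro j hj
      rw [hgsupp j (fun hc => hj ((hKmem j).mpr hc))]
      simp
    have hsum2 : Summable (fun j => M ^ ε *
        (if j ≠ i then G j / znorm (i - j) ^ ((n : ℝ) - α) else 0)) := by
      apply Summable.mul_left
      apply summable_of_ne_finset_zero (s := K)
      intro j hj
      rw [hGsupp j hj]
      simp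
    calc (∑' j, if j ≠ i then g j / znorm (i - j) ^ ((n : ℝ) - α) else 0)
        ≤ ∑' j, M ^ ε * (if j ≠ i then G j / znorm (i - j) ^ ((n : ℝ) - α) else 0) :=
          Summable.tsum_le_tsum hle hsum1 hsum2
      _ = M ^ ε * h i := by rw [tsum_mul_left]
  -- pointwise bound f i ^ r ≤ (M^ε)^q * h i ^ q on K
  have hMε0 : (0 : ℝ) ≤ M ^ ε := Real.rpow_nonneg hM0.le ε
  have hfr : ∀ i ∈ K, f i ^ r ≤ (M ^ ε) ^ q * h i ^ q := by
    intro i hi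
    have e1 : f i ^ r = (f i ^ (r - 1)) ^ q := by
      rw [← Real.rpow_mul (hf i)]
      congr 1
      rw [hq_def]
      field_simp
    rw [e1]
    calc (f i ^ (r - 1)) ^ q ≤ (M ^ ε * h i) ^ q :=
          Real.rpow_le_rpow (Real.rpow_nonneg (hf i) _) (hfpow i hi) hq0.le
      _ = (M ^ ε) ^ q * h i ^ q := Real.mul_rpow hMε0 (hh0 i)
  -- summability of h^q
  set A : ℝ := M ^ (1 - ε) with hA_def
  have hA0 : 0 ≤ A := Real.rpow_nonneg hM0.le _
  have hGA : ∀ j, G j ≤ A := fun j => Real.rpow_le_rpow (hg j) (hgleM j) h1ε.le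
  set w : (Fin n → ℤ) → ℝ := fun v => if v = 0 then 0 else znorm v ^ (-((n : ℝ) - α)) with hw_def
  have hw0 : ∀ v, 0 ≤ w v := by
    intro v
    show (0:ℝ) ≤ if v = 0 then 0 else znorm v ^ (-((n : ℝ) - α))
    split
    · exact le_refl 0
    · exact Real.rpow_nonneg (znorm_nonneg _) _
  have hhle : ∀ i, h i ≤ A * ∑ j ∈ K, w (i - j) := by
    intro i
    rw [hhsum i, Finset.mul_sum]
    apply Finset.sum_le_sum
    intro j hj
    by_cases hji : j ≠ i
    · simp only [if_pos hji]
      have hij0 : i - j ≠ 0 := sub_ne_zero_of_ne (Ne.symm hji)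
      have hwe : w (i - j) = znorm (i - j) ^ (-((n : ℝ) - α)) := by
        simp only [hw_def, if_neg hij0]
      rw [hwe, Real.rpow_neg (znorm_nonneg _), div_eq_mul_inv]
      exact mul_le_mul_of_nonneg_right (hGA j)
        (inv_nonneg.mpr (Real.rpow_nonneg (znorm_nonneg _) _))
    · push_neg at hji
      simp only [if_neg (fun hc : j ≠ i => hc hji)]
      exact mul_nonneg hA0 (hw0 _)
  have hSq : Summable (fun i => h i ^ q) := by
    have hwq : Summable (fun v : Fin n → ℤ => w v ^ q) := by
      have hsz := summable_znorm_rpow (n := n) hn (β := ((n : ℝ) - α) * q) hβ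
      apply hsz.congr
      intro v
      by_cases hv : v = 0
      · simp only [hw_def, if_pos hv]; rw [Real.zero_rpow hq0.ne']
      · simp only [hw_def, if_neg hv]
        rw [← Real.rpow_mul (znorm_nonneg v), neg_mul]
    have hsumtr : Summable (fun i : Fin n → ℤ => ∑ j ∈ K, w (i - j) ^ q) := by
      apply summable_sum
      intro j _
      have hcomp : (fun i : Fin n → ℤ => w (i - j) ^ q)
          = (fun v : Fin n → ℤ => w v ^ q) ∘ (Equiv.subRight j) := rfl
      rw [hcomp]
      exact (Equiv.subRight j).summable_iff.mpr hwq
    apply Summable.of_nonneg_of_le (fun i => Real.rpow_nonneg (hh0 i) q)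
      (fun i => ?_) ((hsumtr.mul_left ((K.card : ℝ) ^ q)).mul_left (A ^ q))
    calc h i ^ q ≤ (A * ∑ j ∈ K, w (i - j)) ^ q :=
          Real.rpow_le_rpow (hh0 i) (hhle i) hq0.le
      _ = A ^ q * (∑ j ∈ K, w (i - j)) ^ q :=
          Real.mul_rpow hA0 (Finset.sum_nonneg fun j _ => hw0 _)
      _ ≤ A ^ q * ((K.card : ℝ) ^ q * ∑ j ∈ K, w (i - j) ^ q) := by
          apply mul_le_mul_of_nonneg_left _ (Real.rpow_nonneg hA0 q)
          exact sum_rpow_le_card_rpow_mul K hKne _ (fun j _ => hw0 _) q hq0.le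
  -- apply hT to G
  have hGsummable : Summable (fun i => |G i| ^ (s / (1 - ε))) := by
    apply summable_of_ne_finset_zero (s := K)
    intro i hi
    rw [hGsupp i hi, abs_zero, Real.zero_rpow]
    positivity
  have hGnorm : _root_.lpNorm G (s / (1 - ε)) = 1 := by
    have e1 : ∑' i, |G i| ^ (s / (1 - ε)) = ∑' i, |g i| ^ s := by
      apply tsum_congr
      intro i
      rw [abs_of_nonneg (hG0 i), abs_of_nonneg (hg i), hG_def]
      simp only []
      rw [← Real.rpow_mul (hg i)]
      congr 1
      field_simp
    rw [_root_.lpNorm, e1, htsg, Real.one_rpow]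
  have hTle := hT G hG0 hGsummable
  rw [hGnorm, mul_one] at hTle
  have hhts : ∑' i, h i ^ q ≤ C ^ q := by
    have e1 : ∑' i, |h i| ^ q = ∑' i, h i ^ q :=
      tsum_congr fun i => by rw [abs_of_nonneg (hh0 i)]
    have hY0 : 0 ≤ ∑' i, h i ^ q := tsum_nonneg fun i => Real.rpow_nonneg (hh0 i) q
    have hln : (∑' i, h i ^ q) ^ (1 / q) ≤ C := by
      have : _root_.lpNorm h q = (∑' i, h i ^ q) ^ (1 / q) := by rw [_root_.lpNorm, e1]
      rw [← this]
      exact hTle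
    calc ∑' i, h i ^ q = ((∑' i, h i ^ q) ^ (1 / q)) ^ q := by
          rw [← Real.rpow_mul hY0, one_div_mul_cancel hq0.ne', Real.rpow_one]
      _ ≤ C ^ q := Real.rpow_le_rpow (Real.rpow_nonneg hY0 _) hln hq0.le
  -- main chain
  have hfinal : (1 : ℝ) ≤ (M ^ ε) ^ q * C ^ q := by
    calc (1 : ℝ) = ∑' i, |f i| ^ r := htsf.symm
      _ = ∑ i ∈ K, f i ^ r := by
          rw [tsum_eq_sum (s := K) (fun i hi => by
            rw [hfsupp i (fun hc => hi ((hKmem i).mpr hc)), abs_zero,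
              Real.zero_rpow hr0.ne'])]
          exact Finset.sum_congr rfl fun i _ => by rw [abs_of_nonneg (hf i)]
      _ ≤ ∑ i ∈ K, (M ^ ε) ^ q * h i ^ q := Finset.sum_le_sum hfr
      _ = (M ^ ε) ^ q * ∑ i ∈ K, h i ^ q := by rw [Finset.mul_sum]
      _ ≤ (M ^ ε) ^ q * ∑' i, h i ^ q := by
          apply mul_le_mul_of_nonneg_left _ (Real.rpow_nonneg hMε0 q)
          exact Summable.sum_le_tsum K (fun i _ => Real.rpow_nonneg (hh0 i) q) hSq
      _ ≤ (M ^ ε) ^ q * C ^ q := mul_le_mul_of_nonneg_left hhts (Real.rpow_nonneg hMε0 q)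
  have h2 : 1 ≤ C * M ^ ε := by
    by_contra hcon
    push_neg at hcon
    have hcm0 : 0 ≤ C * M ^ ε := mul_nonneg hC.le hMε0
    have he : (M ^ ε) ^ q * C ^ q = (C * M ^ ε) ^ q := by
      rw [Real.mul_rpow hC.le hMε0, mul_comm]
    rw [he] at hfinal
    have hlt : (C * M ^ ε) ^ q < 1 := Real.rpow_lt_one hcm0 hcon hq0
    linarith
  refine ⟨k, (hKmem k).mp hkK, ?_⟩
  have h3 : C⁻¹ ≤ M ^ ε := by
    rw [inv_eq_one_div, div_le_iff₀ hC]
    linarith [mul_comm (M ^ ε) C]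
  have h4 : (C⁻¹) ^ (1 / ε) ≤ M := by
    have hstep : (C⁻¹) ^ (1 / ε) ≤ (M ^ ε) ^ (1 / ε) :=
      Real.rpow_le_rpow (inv_nonneg.mpr hC.le) h3 (by positivity)
    rwa [← Real.rpow_mul hM0.le, mul_one_div_cancel hε0.ne', Real.rpow_one] at hstep
  rw [← hM]
  calc C ^ (-(1 / ε)) = (C ^ (1 / ε))⁻¹ := Real.rpow_neg hC.le _
    _ = (C⁻¹) ^ (1 / ε) := (Real.inv_rpow hC.le _).symm
    _ ≤ M := h4
end
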